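/- Let G be a residually finite group and let A be a finite set. If X ⊆ A^G is a strongly irreducible subshift of finite type containing a periodic configuration, then the automorphism group Aut(X), consisting of all bijective cellular automata τ : X → X under composition, is residually finite. -/

import Mathlib

/-- The shift action of a group `G` on configurations `x : G → A`:
`(g • x)(h) = x(g⁻¹h)`. -/
def shift {G A : Type*} [Group G] (g : G) (x : G → A) : G → A :=
  fun h => x (g⁻¹ * h)

/-- A subshift is a closed, shift-invariant subset of `A^G` (with the prodiscrete topology). -/
def IsSubshift {G A : Type*} [Group G] [TopologicalSpace A] (X : Set (G → A)) : Prop :=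
  IsClosed X ∧ ∀ (g : G) (x : G → A), x ∈ X → shift g x ∈ X

/-- A configuration is periodic if its orbit under the shift action is finite. -/
def IsPeriodicConfig {G A : Type*} [Group G] (x : G → A) : Prop :=
  (Set.range fun g : G => shift g x).Finite

/-- A subshift is of finite type if it is defined by a finite window `Ω` and a set of
allowed patterns `P ⊆ A^Ω`. -/
def IsOfFiniteType {G A : Type*} [Group G] (X : Set (G → A)) : Prop :=
  ∃ (Ω : Finset G) (P : Set ({g : G // g ∈ Ω} → A)),
    X = {x : G → A | ∀ g : G, (fun w : {g : G // g ∈ Ω} => shift g x w.1) ∈ P}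

/-- A subshift is strongly irreducible if there is a finite `Δ ⊆ G` such that any two
patterns of configurations of `X` with supports `Ω₁, Ω₂` satisfying `Ω₁Δ⁻¹ ∩ Ω₂ = ∅`
can be glued inside `X`. -/
def IsStronglyIrreducible {G A : Type*} [Group G] (X : Set (G → A)) : Prop :=
  ∃ Δ : Finset G, ∀ Ω₁ Ω₂ : Finset G,
    (∀ a ∈ Ω₁, ∀ d ∈ Δ, a * d⁻¹ ∉ Ω₂) →
    ∀ x₁ ∈ X, ∀ x₂ ∈ X, ∃ x ∈ X,
      (∀ w ∈ Ω₁, x w = x₁ w) ∧ (∀ w ∈ Ω₂, x w = x₂ w)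

/-- A group is residually finite if the intersection of its finite-index subgroups is
trivial, i.e. every nontrivial element avoids some finite-index subgroup. -/
def ResiduallyFinite (H : Type*) [Group H] : Prop :=
  ∀ h : H, h ≠ 1 → ∃ K : Subgroup H, K.FiniteIndex ∧ h ∉ K

/-- An automorphism of a subshift `X ⊆ A^G`: a bijective self-map of `X` that is
continuous (in the prodiscrete topology) with continuous inverse and is
`G`-equivariant (together with its inverse) with respect to the shift action.
(For a subshift, a bijective continuous equivariant map automatically has continuous
equivariant inverse, by compactness and shift-invariance.) -/
structure ShiftAut {G A : Type*} [Group G] [TopologicalSpace A] (X : Set (G → A)) where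
  toEquiv : {x : G → A // x ∈ X} ≃ {x : G → A // x ∈ X}
  continuous_toFun : Continuous fun x : {x : G → A // x ∈ X} => (toEquiv x : G → A)
  continuous_invFun : Continuous fun x : {x : G → A // x ∈ X} => (toEquiv.symm x : G → A)
  equivariant : ∀ (g : G) (x y : {x : G → A // x ∈ X}),
    (y : G → A) = shift g (x : G → A) → (toEquiv y : G → A) = shift g (toEquiv x : G → A)
  equivariant_symm : ∀ (g : G) (x y : {x : G → A // x ∈ X}),
    (y : G → A) = shift g (x : G → A) →
      (toEquiv.symm y : G → A) = shift g (toEquiv.symm x : G → A)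

theorem ShiftAut.ext' {G A : Type*} [Group G] [TopologicalSpace A] {X : Set (G → A)}
    {f g : ShiftAut X} (h : f.toEquiv = g.toEquiv) : f = g := by
  cases f; cases g; cases h; rfl

/-- The automorphism group `Aut(X)` of a subshift, under composition. -/
instance ShiftAut.instGroup {G A : Type*} [Group G] [TopologicalSpace A]
    (X : Set (G → A)) : Group (ShiftAut X) where
  mul f₁ f₂ :=
    { toEquiv := f₂.toEquiv.trans f₁.toEquiv
      continuous_toFun := by
        have h2 : Continuous fun x : {x : G → A // x ∈ X} => f₂.toEquiv x :=
          f₂.continuous_toFun.subtype_mk fun x => (f₂.toEquiv x).2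
        exact f₁.continuous_toFun.comp h2
      continuous_invFun := by
        have h1 : Continuous fun x : {x : G → A // x ∈ X} => f₁.toEquiv.symm x :=
          f₁.continuous_invFun.subtype_mk fun x => (f₁.toEquiv.symm x).2
        exact f₂.continuous_invFun.comp h1
      equivariant := fun g x y h => f₁.equivariant g _ _ (f₂.equivariant g x y h)
      equivariant_symm := fun g x y h =>
        f₂.equivariant_symm g _ _ (f₁.equivariant_symm g x y h) }
  one :=
    { toEquiv := Equiv.refl _
      continuous_toFun := continuous_subtype_val
      continuous_invFun := continuous_subtype_val
      equivariant := fun _ _ _ h => h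
      equivariant_symm := fun _ _ _ h => h }
  inv f :=
    { toEquiv := f.toEquiv.symm
      continuous_toFun := f.continuous_invFun
      continuous_invFun := f.continuous_toFun
      equivariant := f.equivariant_symm
      equivariant_symm := f.equivariant }
  mul_assoc a b c := ShiftAut.ext' (Equiv.ext fun _ => rfl)
  one_mul a := ShiftAut.ext' (Equiv.ext fun _ => rfl)
  mul_one a := ShiftAut.ext' (Equiv.ext fun _ => rfl)
  inv_mul_cancel a := ShiftAut.ext' (Equiv.ext fun x => a.toEquiv.symm_apply_apply x)

section Aux
variable {G A : Type*} [Group G]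

theorem shift_shift (g k : G) (x : G → A) : shift g (shift k x) = shift (g * k) x := by
  funext h; simp [shift, mul_assoc]

theorem shift_one (x : G → A) : shift (1:G) x = x := by
  funext h; simp [shift]

/-- The stabilizer of a configuration under the shift action. -/
def shiftStab (p : G → A) : Subgroup G where
  carrier := {g | shift g p = p}
  one_mem' := shift_one p
  mul_mem' := by
    intro a b ha hb
    simp only [Set.mem_setOf_eq] at *
    rw [← shift_shift, hb, ha]
  inv_mem' := by
    intro a ha
    simp only [Set.mem_setOf_eq] at *
    conv_lhs => rw [← ha]
    rw [shift_shift, inv_mul_cancel, shift_one]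

theorem mem_shiftStab {p : G → A} {g : G} : g ∈ shiftStab p ↔ shift g p = p := Iff.rfl

theorem shiftStab_finiteIndex {p : G → A} (hp : IsPeriodicConfig p) :
    (shiftStab p).FiniteIndex := by
  have : Finite ↥(Set.range fun g : G => shift g p) := hp.to_subtype
  have : Finite (G ⧸ shiftStab p) := by
    refine Finite.of_injective (fun q : G ⧸ shiftStab p =>
      (⟨_, Set.mem_range_self q.out⟩ : ↥(Set.range fun g : G => shift g p))) ?_
    intro q₁ q₂ h
    simp only [Subtype.mk.injEq] at h
    rw [← QuotientGroup.out_eq' q₁, ← QuotientGroup.out_eq' q₂]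
    apply QuotientGroup.eq.mpr
    rw [mem_shiftStab, ← shift_shift, ← h, shift_shift, inv_mul_cancel, shift_one]
  exact Subgroup.finiteIndex_of_finite_quotient (H := shiftStab p)

theorem periodic_of_finiteIndex_stab {p : G → A} {K : Subgroup G} (hK : K.FiniteIndex)
    (h : ∀ k ∈ K, shift k p = p) : IsPeriodicConfig p := by
  have : Finite (G ⧸ K) := K.finite_quotient_of_finiteIndex
  have key : Set.range (fun g : G => shift g p) ⊆
      Set.range (fun q : G ⧸ K => shift q.out p) := by
    rintro - ⟨g, rfl⟩
    refine ⟨QuotientGroup.mk g, ?_⟩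
    obtain ⟨k, hk⟩ := QuotientGroup.mk_out_eq_mul K g
    simp only [hk, ← shift_shift, h k k.2]
  exact Set.Finite.subset (Set.finite_range _) key

end Aux


section Aux2
variable {G A : Type*} [Group G]

theorem avoid_finset (hG : ResiduallyFinite G) (H : Subgroup G) (hH : H.FiniteIndex)
    (E : Finset G) : ∃ K : Subgroup G, K ≤ H ∧ K.FiniteIndex ∧
      ∀ k ∈ K, k ≠ 1 → k ∉ E := by
  classical
  induction E using Finset.induction with
  | empty => exact ⟨H, le_rfl, hH, fun k _ _ h => absurd h (Finset.notMem_empty k)⟩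
  | @insert a E ha ih =>
    obtain ⟨K, hKH, hKfi, hK⟩ := ih
    by_cases h1 : a = 1
    · exact ⟨K, hKH, hKfi, fun k hk hkn hmem => by
        rcases Finset.mem_insert.mp hmem with h | h
        · exact hkn (h.trans h1)
        · exact hK k hk hkn h⟩
    · obtain ⟨Ka, hKafi, hKa⟩ := hG a h1
      have : (K ⊓ Ka).FiniteIndex := by have := hKfi; have := hKafi; infer_instance
      refine ⟨K ⊓ Ka, inf_le_left.trans hKH, this, fun k hk hkn hmem => ?_⟩
      rcases Finset.mem_insert.mp hmem with h | h
      · exact hKa (h ▸ hk.2)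
      · exact hK k hk.1 hkn h

end Aux2

section Aux3
variable {G A : Type*} [Group G] [Finite A] [TopologicalSpace A] [DiscreteTopology A]

theorem glue_compact {X : Set (G → A)} (hXc : IsClosed X) {Δ : Finset G}
    (hsi : ∀ Ω₁ Ω₂ : Finset G,
      (∀ a ∈ Ω₁, ∀ d ∈ Δ, a * d⁻¹ ∉ Ω₂) →
      ∀ x₁ ∈ X, ∀ x₂ ∈ X, ∃ x ∈ X,
        (∀ w ∈ Ω₁, x w = x₁ w) ∧ (∀ w ∈ Ω₂, x w = x₂ w))
    {x p : G → A} (hx : x ∈ X) (hp : p ∈ X) (Ω₁ : Finset G) :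
    ∃ z ∈ X, (∀ w ∈ Ω₁, z w = x w) ∧
      ∀ w : G, (∀ a ∈ Ω₁, ∀ d ∈ Δ, w ≠ a * d⁻¹) → z w = p w := by
  classical
  have hT2 : T2Space A := DiscreteTopology.toT2Space
  -- the "forbidden" set
  set S : Set G := {w : G | ∃ a ∈ Ω₁, ∃ d ∈ Δ, w = a * d⁻¹} with hS
  let C : Finset G → Set (G → A) :=
    fun F => X ∩ {z | ∀ w ∈ Ω₁, z w = x w} ∩ {z | ∀ w ∈ F.filter (· ∉ S), z w = p w}
  have hset : ∀ (s : Finset G) (c : G → A),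
      {z : G → A | ∀ w ∈ s, z w = c w} = ⋂ w ∈ s, {z : G → A | z w = c w} := by
    intro s c; ext z; simp
  have hclosed : ∀ F, IsClosed (C F) := by
    intro F
    refine (hXc.inter ?_).inter ?_ <;>
    · rw [hset]
      exact isClosed_biInter fun w _ =>
        isClosed_eq (continuous_apply w) continuous_const
  have hne : ∀ F, (C F).Nonempty := by
    intro F
    have hcond : ∀ a ∈ Ω₁, ∀ d ∈ Δ, a * d⁻¹ ∉ F.filter (· ∉ S) := by
      intro a ha d hd hmem
      exact (Finset.mem_filter.mp hmem).2 ⟨a, ha, d, hd, rfl⟩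
    obtain ⟨z, hz, h1, h2⟩ := hsi Ω₁ (F.filter (· ∉ S)) hcond x hx p hp
    exact ⟨z, ⟨hz, h1⟩, h2⟩
  have hdir : Directed (· ⊇ ·) C := by
    intro F₁ F₂
    refine ⟨F₁ ∪ F₂, ?_, ?_⟩ <;>
    · rintro z ⟨hz1, hz2⟩
      refine ⟨hz1, fun w hw => hz2 w ?_⟩
      simp only [Finset.mem_filter, Finset.mem_union] at *
      tauto
  have hcompact : ∀ F, IsCompact (C F) := by
    intro F
    exact (hclosed F).isCompact
  obtain ⟨z, hz⟩ := IsCompact.nonempty_iInter_of_directed_nonempty_isCompact_isClosed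
    C hdir hne hcompact hclosed
  simp only [Set.mem_iInter] at hz
  have h0 := hz ∅
  refine ⟨z, h0.1.1, h0.1.2, fun w hw => ?_⟩
  have hws : w ∉ S := by
    rintro ⟨a, ha, d, hd, rfl⟩
    exact hw a ha d hd rfl
  exact (hz {w}).2 w (Finset.mem_filter.mpr ⟨Finset.mem_singleton_self w, hws⟩)
end Aux3



section Aux4
variable {G A : Type*} [Group G] [Finite A] [TopologicalSpace A] [DiscreteTopology A]

theorem dense_periodic {X : Set (G → A)} (hG : ResiduallyFinite G)
    (hXc : IsClosed X) (hft : IsOfFiniteType X) (hsi : IsStronglyIrreducible X)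
    {p : G → A} (hp : p ∈ X) (hpper : IsPeriodicConfig p)
    {x : G → A} (hx : x ∈ X) (Ω : Finset G) :
    ∃ y ∈ X, IsPeriodicConfig y ∧ ∀ w ∈ Ω, y w = x w := by
  classical
  obtain ⟨Δ, hΔ⟩ := hsi
  obtain ⟨W, P, hXeq⟩ := hft
  obtain ⟨z, hzX, hz1, hz2⟩ := glue_compact hXc hΔ hx hp Ω
  set S₀ : Finset G := Ω ∪ (Ω ×ˢ Δ).image (fun q => q.1 * q.2⁻¹) with hS₀
  have hΩS₀ : ∀ w ∈ Ω, w ∈ S₀ := fun w hw => Finset.mem_union_left _ hw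
  have hz2' : ∀ w : G, w ∉ S₀ → z w = p w := by
    intro w hw
    refine hz2 w fun a ha d hd heq => ?_
    exact hw (Finset.mem_union_right _ (Finset.mem_image.mpr
      ⟨(a, d), Finset.mem_product.mpr ⟨ha, hd⟩, heq.symm⟩))
  -- the finite "bad" set for residual finiteness
  set E : Finset G :=
    ((S₀ ×ˢ W) ×ˢ (W ×ˢ S₀)).image (fun q => q.1.1 * q.1.2⁻¹ * (q.2.1 * q.2.2⁻¹)) ∪
    (S₀ ×ˢ S₀).image (fun q => q.1 * q.2⁻¹) with hE
  have hE1 : ∀ s₁ ∈ S₀, ∀ w₁ ∈ W, ∀ w₂ ∈ W, ∀ s₂ ∈ S₀,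
      s₁ * w₁⁻¹ * (w₂ * s₂⁻¹) ∈ E := by
    intro s₁ h1 w₁ hw1 w₂ hw2 s₂ h2
    exact Finset.mem_union_left _ (Finset.mem_image.mpr
      ⟨((s₁, w₁), (w₂, s₂)), Finset.mem_product.mpr
        ⟨Finset.mem_product.mpr ⟨h1, hw1⟩, Finset.mem_product.mpr ⟨hw2, h2⟩⟩, rfl⟩)
  have hE2 : ∀ s₁ ∈ S₀, ∀ s₂ ∈ S₀, s₁ * s₂⁻¹ ∈ E := by
    intro s₁ h1 s₂ h2
    exact Finset.mem_union_right _ (Finset.mem_image.mpr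
      ⟨(s₁, s₂), Finset.mem_product.mpr ⟨h1, h2⟩, rfl⟩)
  obtain ⟨K, hKH, hKfi, hKE⟩ :=
    avoid_finset hG (shiftStab p) (shiftStab_finiteIndex hpper) E
  have hKp : ∀ k ∈ K, shift k p = p := fun k hk => hKH hk
  -- uniqueness of the translate containing a given point
  have huniq : ∀ k₁ ∈ K, ∀ k₂ ∈ K, ∀ g : G,
      k₁⁻¹ * g ∈ S₀ → k₂⁻¹ * g ∈ S₀ → k₁ = k₂ := by
    intro k₁ hk₁ k₂ hk₂ g h1 h2
    by_contra hne
    have hmem : k₁⁻¹ * k₂ ∈ K := mul_mem (inv_mem hk₁) hk₂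
    have hne1 : k₁⁻¹ * k₂ ≠ 1 := by
      intro h; exact hne (inv_mul_eq_one.mp h)
    refine hKE _ hmem hne1 ?_
    have : (k₁⁻¹ * g) * (k₂⁻¹ * g)⁻¹ = k₁⁻¹ * k₂ := by group
    rw [← this]
    exact hE2 _ h1 _ h2
  -- the candidate periodic configuration
  set y : G → A := fun g =>
    if h : ∃ k, k ∈ K ∧ k⁻¹ * g ∈ S₀ then z (h.choose⁻¹ * g) else p g with hy
  have lemA : ∀ k ∈ K, ∀ g : G, k⁻¹ * g ∈ S₀ → y g = z (k⁻¹ * g) := by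
    intro k hk g hg
    have hex : ∃ k', k' ∈ K ∧ k'⁻¹ * g ∈ S₀ := ⟨k, hk, hg⟩
    rw [hy]
    simp only [dif_pos hex]
    have := huniq _ hex.choose_spec.1 _ hk g hex.choose_spec.2 hg
    rw [this]
  have lemB : ∀ g : G, (∀ k ∈ K, k⁻¹ * g ∉ S₀) → y g = p g := by
    intro g hg
    rw [hy]
    refine dif_neg ?_
    rintro ⟨k, hk, hks⟩
    exact hg k hk hks
  have lemC : ∀ k ∈ K, ∀ g : G, (∀ k' ∈ K, k' ≠ k → k'⁻¹ * g ∉ S₀) →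
      y g = z (k⁻¹ * g) := by
    intro k hk g hcond
    by_cases hg : k⁻¹ * g ∈ S₀
    · exact lemA k hk g hg
    · have hall : ∀ k' ∈ K, k'⁻¹ * g ∉ S₀ := by
        intro k' hk'
        by_cases hkk : k' = k
        · rw [hkk]; exact hg
        · exact hcond k' hk' hkk
      rw [lemB g hall, hz2' _ hg]
      have := hKp k hk
      calc p g = shift k p g := by rw [this]
      _ = p (k⁻¹ * g) := rfl
  -- y agrees with x on Ω
  have hagree : ∀ w ∈ Ω, y w = x w := by
    intro w hw
    have : y w = z ((1:G)⁻¹ * w) := by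
      refine lemC 1 (one_mem K) w ?_
      intro k' hk' hne hmem
      refine hKE k' hk' hne ?_
      have : w * (k'⁻¹ * w)⁻¹ = k' := by group
      rw [← this]
      exact hE2 _ (hΩS₀ w hw) _ hmem
    rw [this, inv_one, one_mul]
    exact hz1 w hw
  -- y is K-periodic
  have hyper : ∀ k ∈ K, shift k y = y := by
    intro k hk
    funext g
    show y (k⁻¹ * g) = y g
    by_cases hex : ∃ k', k' ∈ K ∧ k'⁻¹ * g ∈ S₀
    · obtain ⟨k', hk', hks⟩ := hex
      have h1 : y g = z (k'⁻¹ * g) := lemA k' hk' g hks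
      have hkk : k⁻¹ * k' ∈ K := mul_mem (inv_mem hk) hk'
      have h2 : (k⁻¹ * k')⁻¹ * (k⁻¹ * g) = k'⁻¹ * g := by group
      have h3 : y (k⁻¹ * g) = z ((k⁻¹ * k')⁻¹ * (k⁻¹ * g)) := by
        refine lemA _ hkk _ ?_
        rw [h2]; exact hks
      rw [h3, h2, h1]
    · push_neg at hex
      have h1 : y g = p g := lemB g hex
      have h2 : y (k⁻¹ * g) = p (k⁻¹ * g) := by
        refine lemB _ ?_
        intro k'' hk'' hmem
        refine hex (k * k'') (mul_mem hk hk'') ?_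
        have : (k * k'')⁻¹ * g = k''⁻¹ * (k⁻¹ * g) := by group
        rw [this]; exact hmem
      rw [h1, h2]
      have := hKp k hk
      calc p (k⁻¹ * g) = shift k p g := rfl
      _ = p g := by rw [this]
  -- y is in X
  have hyX : y ∈ X := by
    rw [hXeq]
    intro g
    rw [hXeq] at hzX hp
    by_cases hc : ∃ k, k ∈ K ∧ ∃ w ∈ W, k⁻¹ * (g⁻¹ * w) ∈ S₀
    · obtain ⟨k, hk, w₀, hw₀, hs₀⟩ := hc
      have key : (fun w : {g : G // g ∈ W} => shift g y w.1) =
          (fun w : {g : G // g ∈ W} => shift (g * k) z w.1) := by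
        funext w
        show y (g⁻¹ * w.1) = z ((g * k)⁻¹ * w.1)
        have heq : (g * k)⁻¹ * w.1 = k⁻¹ * (g⁻¹ * w.1) := by group
        rw [heq]
        refine lemC k hk (g⁻¹ * w.1) ?_
        intro k' hk' hne hmem
        have hne1 : k⁻¹ * k' ≠ 1 := fun h => hne (inv_mul_eq_one.mp h).symm
        refine hKE _ (mul_mem (inv_mem hk) hk') hne1 ?_
        have hid : (k⁻¹ * (g⁻¹ * w₀)) * w₀⁻¹ * (w.1 * (k'⁻¹ * (g⁻¹ * w.1))⁻¹) =
            k⁻¹ * k' := by group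
        rw [← hid]
        exact hE1 _ hs₀ _ hw₀ _ w.2 _ hmem
      rw [key]
      exact hzX (g * k)
    · push_neg at hc
      have key : (fun w : {g : G // g ∈ W} => shift g y w.1) =
          (fun w : {g : G // g ∈ W} => shift g p w.1) := by
        funext w
        show y (g⁻¹ * w.1) = p (g⁻¹ * w.1)
        refine lemB _ ?_
        intro k hk
        exact hc k hk w.1 w.2
      rw [key]
      exact hp g
  exact ⟨y, hyX, periodic_of_finiteIndex_stab hKfi hyper, hagree⟩

end Aux4


theorem fix_finite {G A : Type*} [Group G] [Finite A] (X : Set (G → A))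
    (K : Subgroup G) (hK : K.FiniteIndex) :
    Finite {u : {x : G → A // x ∈ X} // ∀ k ∈ K, shift k (u : G → A) = u} := by
  have : Finite (G ⧸ K) := K.finite_quotient_of_finiteIndex
  set T := {u : {x : G → A // x ∈ X} // ∀ k ∈ K, shift k (u : G → A) = u}
  have key : ∀ (u : T) (g : G),
      (u.1 : G → A) g = (u.1 : G → A) ((QuotientGroup.mk g⁻¹ : G ⧸ K)).out⁻¹ := by
    intro u g
    obtain ⟨k, hk⟩ := QuotientGroup.mk_out_eq_mul K g⁻¹
    rw [hk]
    have h1 : (g⁻¹ * (k : G))⁻¹ = (k : G)⁻¹ * g := by group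
    rw [h1]
    have h2 := u.2 k k.2
    calc (u.1 : G → A) g = shift (k : G) (u.1 : G → A) g := by rw [h2]
    _ = (u.1 : G → A) ((k : G)⁻¹ * g) := rfl
  refine Finite.of_injective
    (fun u : T => fun q : G ⧸ K => (u.1 : G → A) q.out⁻¹) ?_
  intro u v h
  refine Subtype.ext (Subtype.ext (funext fun g => ?_))
  calc (u.1 : G → A) g = (u.1 : G → A) ((QuotientGroup.mk g⁻¹ : G ⧸ K)).out⁻¹ :=
        key u g
  _ = (v.1 : G → A) ((QuotientGroup.mk g⁻¹ : G ⧸ K)).out⁻¹ :=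
        congrFun h (QuotientGroup.mk g⁻¹)
  _ = (v.1 : G → A) g := (key v g).symm


/-- If `G` is residually finite, `A` a finite set and `X ⊆ A^G` a strongly irreducible
subshift of finite type containing a periodic configuration, then the automorphism
group `Aut(X)` of `X` is residually finite. -/
theorem aut_residually_finite
    {G A : Type*} [Group G] [Finite A] [TopologicalSpace A] [DiscreteTopology A]
    (hG : ResiduallyFinite G) (X : Set (G → A))
    (hX : IsSubshift X) (hft : IsOfFiniteType X) (hsi : IsStronglyIrreducible X)
    (hper : ∃ x ∈ X, IsPeriodicConfig x) :
    ResiduallyFinite (ShiftAut X) := by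
  classical
  intro τ hτ
  -- find a point moved by τ
  have hne : ∃ x₀ : {x : G → A // x ∈ X}, τ.toEquiv x₀ ≠ x₀ := by
    by_contra hall
    push_neg at hall
    exact hτ (ShiftAut.ext' (Equiv.ext hall))
  obtain ⟨x₀, hx₀⟩ := hne
  have hne2 : ∃ g₀ : G, (τ.toEquiv x₀ : G → A) g₀ ≠ (x₀ : G → A) g₀ := by
    by_contra hall
    push_neg at hall
    exact hx₀ (Subtype.ext (funext hall))
  obtain ⟨g₀, hg₀⟩ := hne2
  -- local determination of the value at g₀
  have hcont : Continuous fun x : {x : G → A // x ∈ X} => (τ.toEquiv x : G → A) g₀ :=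
    (continuous_apply g₀).comp τ.continuous_toFun
  have hUopen : IsOpen {x : {x : G → A // x ∈ X} |
      (τ.toEquiv x : G → A) g₀ = (τ.toEquiv x₀ : G → A) g₀} := by
    have : {x : {x : G → A // x ∈ X} |
        (τ.toEquiv x : G → A) g₀ = (τ.toEquiv x₀ : G → A) g₀} =
        (fun x : {x : G → A // x ∈ X} => (τ.toEquiv x : G → A) g₀) ⁻¹'
          {(τ.toEquiv x₀ : G → A) g₀} := by
      ext; simp
    rw [this]
    exact hcont.isOpen_preimage _ (isOpen_discrete _)
  obtain ⟨V, hVopen, hVeq⟩ := isOpen_induced_iff.mp hUopen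
  have hx₀V : (x₀ : G → A) ∈ V := by
    have : x₀ ∈ Subtype.val ⁻¹' V := hVeq ▸ rfl
    exact this
  obtain ⟨I, u, hIu, hIV⟩ := isOpen_pi_iff.mp hVopen _ hx₀V
  -- a periodic configuration close to x₀
  obtain ⟨p, hpX, hpper⟩ := hper
  obtain ⟨y, hyX, hyper, hyagree⟩ := dense_periodic hG hX.1 hft hsi hpX hpper x₀.2
    (insert g₀ I)
  set yy : {x : G → A // x ∈ X} := ⟨y, hyX⟩ with hyy
  have hyU : (τ.toEquiv yy : G → A) g₀ = (τ.toEquiv x₀ : G → A) g₀ := by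
    have hyV : (yy : G → A) ∈ V := by
      refine hIV ?_
      intro i hi
      have : y i = (x₀ : G → A) i := hyagree i (Finset.mem_insert_of_mem hi)
      change u i ((yy : G → A) i)
      show y i ∈ u i
      rw [this]
      exact (hIu i hi).2
    have : yy ∈ Subtype.val ⁻¹' V := hyV
    rw [hVeq] at this
    exact this
  have hymoved : τ.toEquiv yy ≠ yy := by
    intro h
    apply hg₀
    calc (τ.toEquiv x₀ : G → A) g₀ = (τ.toEquiv yy : G → A) g₀ := hyU.symm
    _ = (yy : G → A) g₀ := by rw [h]
    _ = (x₀ : G → A) g₀ := hyagree g₀ (Finset.mem_insert_self g₀ I)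
  -- the finite set of configurations fixed by the stabilizer of y
  set K : Subgroup G := shiftStab y with hK
  have hKfi : K.FiniteIndex := shiftStab_finiteIndex hyper
  set T := {u : {x : G → A // x ∈ X} // ∀ k ∈ K, shift k (u : G → A) = u} with hT
  have hTfin : Finite T := fix_finite X K hKfi
  -- every automorphism preserves this set
  have hpres : ∀ (σ : ShiftAut X) (v : {x : G → A // x ∈ X}),
      (∀ k ∈ K, shift k (v : G → A) = v) →
      ∀ k ∈ K, shift k (σ.toEquiv v : G → A) = σ.toEquiv v := by
    intro σ v hv k hk
    exact (σ.equivariant k v v (hv k hk).symm).symm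
  have hpres' : ∀ (σ : ShiftAut X) (v : {x : G → A // x ∈ X}),
      (∀ k ∈ K, shift k (v : G → A) = v) →
      ∀ k ∈ K, shift k (σ.toEquiv.symm v : G → A) = σ.toEquiv.symm v := by
    intro σ v hv k hk
    exact (σ.equivariant_symm k v v (hv k hk).symm).symm
  -- the homomorphism to the (finite) permutation group of T
  let permOf : ShiftAut X → Equiv.Perm T := fun σ =>
    { toFun := fun v => ⟨σ.toEquiv v.1, hpres σ v.1 v.2⟩
      invFun := fun v => ⟨σ.toEquiv.symm v.1, hpres' σ v.1 v.2⟩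
      left_inv := fun v => Subtype.ext (σ.toEquiv.symm_apply_apply v.1)
      right_inv := fun v => Subtype.ext (σ.toEquiv.apply_symm_apply v.1) }
  let φ : ShiftAut X →* Equiv.Perm T :=
    MonoidHom.mk' permOf (fun σ₁ σ₂ => Equiv.ext fun v => rfl)
  have : Finite (Equiv.Perm T) := by infer_instance
  refine ⟨φ.ker, ?_, ?_⟩
  · exact Subgroup.finiteIndex_ker φ
  · intro hmem
    rw [MonoidHom.mem_ker] at hmem
    have hyyT : ∀ k ∈ K, shift k (yy : G → A) = yy := fun k hk => hk
    have := congrFun (congrArg (fun e : Equiv.Perm T => (e : T → T)) hmem)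
      ⟨yy, hyyT⟩
    have h2 : τ.toEquiv yy = yy := congrArg Subtype.val this
    exact hymoved h2
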